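/- arXiv:1809.04694 — 2 statements merged into one kernel-verified Lean document; each statement's English description precedes it below -/
import Mathlib

section
/- Let q̃ : ℝ → ℝ be continuous with q̃(x) → ∞ as x → -∞. Then for every M > 0 there exist a twice continuously differentiable function y : ℝ → ℝ solving -y'' + q̃·y = 0 on ℝ and a point x₀ < 0 such that y is strictly positive on (-∞, x₀) and |y(x)| ≤ e^{-M·|x|} for all x < x₀. -/
open Filter Real Set MeasureTheory intervalIntegral


open Filter Real Set MeasureTheory intervalIntegral

namespace DecayAux

/-- Basic kernel estimate for the Volterra iteration. -/
lemma key_est {t₀ x c : ℝ} (hc : 0 ≤ c) (n : ℕ) {φ : ℝ → ℝ}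
    (hb : ∀ s ∈ uIcc t₀ x, |φ s| ≤ c * |s - t₀| ^ n) :
    |∫ s in t₀..x, φ s| ≤ c * |x - t₀| ^ (n + 1) / (n + 1) := by
  have hsub : Set.uIoc t₀ x ⊆ uIcc t₀ x := uIoc_subset_uIcc
  rcases le_total t₀ x with h | h
  · have hbb : ∀ᵐ t ∂(volume.restrict (Set.uIoc t₀ x)), ‖φ t‖ ≤ c * (t - t₀) ^ n := by
      refine ae_restrict_of_forall_mem measurableSet_uIoc fun s hs => ?_
      have hs' := hsub hs
      have h1 := hb s hs'
      rw [uIcc_of_le h] at hs'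
      have h3 : |s - t₀| = s - t₀ := abs_of_nonneg (by linarith [hs'.1])
      rwa [Real.norm_eq_abs, ← h3]
    have hgint : IntervalIntegrable (fun s => c * (s - t₀) ^ n) volume t₀ x :=
      (continuous_const.mul ((continuous_id.sub continuous_const).pow n)).intervalIntegrable _ _
    have hle := intervalIntegral.norm_integral_le_abs_of_norm_le hbb hgint
    rw [Real.norm_eq_abs] at hle
    refine hle.trans ?_
    have hval : (∫ s in t₀..x, c * (s - t₀) ^ n) = c * ((x - t₀) ^ (n + 1) / (n + 1)) := by
      rw [intervalIntegral.integral_const_mul]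
      have h2 : (∫ s in t₀..x, (s - t₀) ^ n) = ∫ u in t₀ - t₀..x - t₀, u ^ n :=
        intervalIntegral.integral_comp_sub_right (fun u => u ^ n) t₀
      rw [h2, sub_self, integral_pow]
      ring_nf
    have hp : (0:ℝ) ≤ (x - t₀) ^ (n + 1) := pow_nonneg (by linarith) _
    rw [hval, abs_of_nonneg (mul_nonneg hc (div_nonneg hp (by positivity)))]
    rw [abs_of_nonneg (by linarith : (0:ℝ) ≤ x - t₀)]
    rw [mul_div_assoc]
  · have hbb : ∀ᵐ t ∂(volume.restrict (Set.uIoc t₀ x)), ‖φ t‖ ≤ c * (t₀ - t) ^ n := by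
      refine ae_restrict_of_forall_mem measurableSet_uIoc fun s hs => ?_
      have hs' := hsub hs
      have h1 := hb s hs'
      rw [uIcc_of_ge h] at hs'
      have h3 : |s - t₀| = t₀ - s := by
        rw [abs_sub_comm]; exact abs_of_nonneg (by linarith [hs'.2])
      rwa [Real.norm_eq_abs, ← h3]
    have hgint : IntervalIntegrable (fun s => c * (t₀ - s) ^ n) volume t₀ x :=
      (continuous_const.mul ((continuous_const.sub continuous_id).pow n)).intervalIntegrable _ _
    have hle := intervalIntegral.norm_integral_le_abs_of_norm_le hbb hgint
    rw [Real.norm_eq_abs] at hle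
    refine hle.trans ?_
    have hval : (∫ s in t₀..x, c * (t₀ - s) ^ n) = -(c * ((t₀ - x) ^ (n + 1) / (n + 1))) := by
      rw [intervalIntegral.integral_const_mul]
      have h2 : (∫ s in t₀..x, (t₀ - s) ^ n) = ∫ u in t₀ - x..t₀ - t₀, u ^ n :=
        intervalIntegral.integral_comp_sub_left (fun u => u ^ n) t₀
      rw [h2, sub_self, integral_pow]
      ring_nf
    have hp : (0:ℝ) ≤ (t₀ - x) ^ (n + 1) := pow_nonneg (by linarith) _
    rw [hval, abs_neg, abs_of_nonneg (mul_nonneg hc (div_nonneg hp (by positivity)))]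
    rw [abs_sub_comm, abs_of_nonneg (by linarith : (0:ℝ) ≤ t₀ - x)]
    rw [mul_div_assoc]

/-- Interval integral of a shifted exponential. -/
lemma exp_interval (c a y x : ℝ) (hc : c ≠ 0) :
    ∫ s in y..x, Real.exp (c * (s - a)) =
      (Real.exp (c * (x - a)) - Real.exp (c * (y - a))) / c := by
  have h1 : (∫ s in y..x, Real.exp (c * (s - a))) = ∫ u in y - a..x - a, Real.exp (c * u) :=
    intervalIntegral.integral_comp_sub_right (fun u => Real.exp (c * u)) a
  rw [h1, intervalIntegral.integral_comp_mul_left (fun u => Real.exp u) hc, integral_exp,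
    smul_eq_mul]
  field_simp

/-- Integrability of a shifted exponential on `Iic`. -/
lemma exp_integrableOn_Iic (c a x : ℝ) (hc : 0 < c) :
    IntegrableOn (fun s => Real.exp (c * (s - a))) (Iic x) := by
  have hcont : Continuous fun s : ℝ => Real.exp (c * (s - a)) := by continuity
  refine integrableOn_Iic_of_intervalIntegral_norm_bounded
    (Real.exp (c * (x - a)) / c) x (a := fun i : ℕ => x - i) (l := atTop)
    (fun i => hcont.integrableOn_Ioc) ?_ ?_
  · have h1 : Tendsto (fun i : ℕ => -(i:ℝ)) atTop atBot :=
      tendsto_neg_atTop_atBot.comp tendsto_natCast_atTop_atTop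
    have h2 := tendsto_atBot_add_const_left atTop x h1
    simpa [sub_eq_add_neg] using h2
  · refine Filter.Eventually.of_forall fun i => ?_
    have hcg : (∫ s in (x - (i:ℝ))..x, ‖Real.exp (c * (s - a))‖) =
        ∫ s in (x - (i:ℝ))..x, Real.exp (c * (s - a)) := by
      refine intervalIntegral.integral_congr fun s _ => ?_
      exact Real.norm_of_nonneg (Real.exp_pos _).le
    rw [hcg, exp_interval _ _ _ _ hc.ne']
    have he := (Real.exp_pos (c * (x - (i:ℝ) - a))).le
    gcongr
    linarith [Real.exp_pos (c * (x - (i:ℝ) - a))]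

/-- Value of the integral of a shifted exponential on `Iic`. -/
lemma exp_integral_Iic (c a x : ℝ) (hc : 0 < c) :
    ∫ s in Iic x, Real.exp (c * (s - a)) = Real.exp (c * (x - a)) / c := by
  have hder : ∀ s ∈ Iio x, HasDerivAt (fun s => Real.exp (c * (s - a)) / c)
      (Real.exp (c * (s - a))) s := by
    intro s _
    have h1 : HasDerivAt (fun s : ℝ => c * (s - a)) c s := by
      simpa using ((hasDerivAt_id s).sub_const a).const_mul c
    have h2 := (h1.exp).div_const c
    refine h2.congr_deriv ?_
    rw [mul_div_assoc, div_self hc.ne', mul_one]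
  have hlim : Tendsto (fun s => Real.exp (c * (s - a)) / c) atBot (nhds 0) := by
    have h1 : Tendsto (fun s : ℝ => c * (s - a)) atBot atBot := by
      apply Tendsto.const_mul_atBot hc
      exact tendsto_atBot_add_const_right _ _ tendsto_id
    have h2 := (Real.tendsto_exp_atBot.comp h1).div_const c
    simpa using h2
  have hfin := MeasureTheory.integral_Iic_of_hasDerivAt_of_tendsto
    (Continuous.continuousWithinAt (by fun_prop)) hder (exp_integrableOn_Iic c a x hc) hlim
  rw [hfin, sub_zero]

end DecayAux


namespace DecayAux

variable (q : ℝ → ℝ) (t₀ α β : ℝ)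

/-- Extension of a continuous map on an interval to all of `ℝ`. -/
noncomputable def ext (R : ℝ) (hR : 0 ≤ R) (F : C(Icc (t₀ - R) (t₀ + R), ℝ)) : ℝ → ℝ :=
  IccExtend (by linarith) F

lemma ext_continuous (R : ℝ) (hR : 0 ≤ R) (F : C(Icc (t₀ - R) (t₀ + R), ℝ)) :
    Continuous (ext t₀ R hR F) :=
  F.continuous.Icc_extend'

lemma ext_apply (R : ℝ) (hR : 0 ≤ R) (F : C(Icc (t₀ - R) (t₀ + R), ℝ)) {x : ℝ}
    (hx : x ∈ Icc (t₀ - R) (t₀ + R)) : ext t₀ R hR F x = F ⟨x, hx⟩ :=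
  IccExtend_of_mem _ F hx

lemma mem_J {R : ℝ} (hR : 0 ≤ R) : t₀ ∈ Icc (t₀ - R) (t₀ + R) :=
  ⟨by linarith, by linarith⟩

lemma uIcc_sub {R x : ℝ} (hR : 0 ≤ R) (hx : x ∈ Icc (t₀ - R) (t₀ + R)) :
    uIcc t₀ x ⊆ Icc (t₀ - R) (t₀ + R) := by
  have h : t₀ - R ≤ t₀ + R := by linarith
  have h1 : t₀ ∈ uIcc (t₀ - R) (t₀ + R) := by rw [uIcc_of_le h]; exact mem_J t₀ hR
  have h2 : x ∈ uIcc (t₀ - R) (t₀ + R) := by rw [uIcc_of_le h]; exact hx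
  rw [← uIcc_of_le h]
  exact uIcc_subset_uIcc h1 h2

/-- The Volterra operator for `y'' = q y`, `y t₀ = α`, `y' t₀ = β`. -/
noncomputable def TT (hq : Continuous q) (R : ℝ) (hR : 0 ≤ R)
    (F : C(Icc (t₀ - R) (t₀ + R), ℝ)) : C(Icc (t₀ - R) (t₀ + R), ℝ) :=
  ⟨fun x => α + β * ((x : ℝ) - t₀) +
      ((x : ℝ) * ∫ s in t₀..(x : ℝ), q s * ext t₀ R hR F s) -
      ∫ s in t₀..(x : ℝ), s * (q s * ext t₀ R hR F s), by
    have hc1 : Continuous fun s => q s * ext t₀ R hR F s :=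
      hq.mul (ext_continuous t₀ R hR F)
    have hc2 : Continuous fun s => s * (q s * ext t₀ R hR F s) := continuous_id.mul hc1
    have hp1 := intervalIntegral.continuous_primitive (μ := volume)
      (fun a b => hc1.intervalIntegrable a b) t₀
    have hp2 := intervalIntegral.continuous_primitive (μ := volume)
      (fun a b => hc2.intervalIntegrable a b) t₀
    have : Continuous fun t : ℝ => α + β * (t - t₀) +
        (t * ∫ s in t₀..t, q s * ext t₀ R hR F s) -
        ∫ s in t₀..t, s * (q s * ext t₀ R hR F s) := by
      apply Continuous.sub
      · exact (continuous_const.add (continuous_const.mul (continuous_id.sub continuous_const))).add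
          (continuous_id.mul hp1)
      · exact hp2
    exact this.comp continuous_subtype_val⟩

lemma TT_sub (hq : Continuous q) (R : ℝ) (hR : 0 ≤ R)
    (F G : C(Icc (t₀ - R) (t₀ + R), ℝ)) (x : Icc (t₀ - R) (t₀ + R)) :
    TT q t₀ α β hq R hR F x - TT q t₀ α β hq R hR G x =
      ∫ s in t₀..(x : ℝ),
        ((x : ℝ) - s) * (q s * (ext t₀ R hR F s - ext t₀ R hR G s)) := by
  have hcF : Continuous fun s => q s * ext t₀ R hR F s := hq.mul (ext_continuous t₀ R hR F)
  have hcG : Continuous fun s => q s * ext t₀ R hR G s := hq.mul (ext_continuous t₀ R hR G)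
  have i1 : IntervalIntegrable (fun s => q s * ext t₀ R hR F s) volume t₀ (x : ℝ) :=
    hcF.intervalIntegrable _ _
  have i2 : IntervalIntegrable (fun s => q s * ext t₀ R hR G s) volume t₀ (x : ℝ) :=
    hcG.intervalIntegrable _ _
  have i3 : IntervalIntegrable (fun s => s * (q s * ext t₀ R hR F s)) volume t₀ (x : ℝ) :=
    (continuous_id.mul hcF).intervalIntegrable _ _
  have i4 : IntervalIntegrable (fun s => s * (q s * ext t₀ R hR G s)) volume t₀ (x : ℝ) :=
    (continuous_id.mul hcG).intervalIntegrable _ _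
  have hrhs : (∫ s in t₀..(x : ℝ),
      ((x : ℝ) - s) * (q s * (ext t₀ R hR F s - ext t₀ R hR G s))) =
      ∫ s in t₀..(x : ℝ),
        ((x : ℝ) * (q s * ext t₀ R hR F s) - (x : ℝ) * (q s * ext t₀ R hR G s)) -
          (s * (q s * ext t₀ R hR F s) - s * (q s * ext t₀ R hR G s)) :=
    intervalIntegral.integral_congr fun s _ => by ring
  rw [hrhs, intervalIntegral.integral_sub ((i1.const_mul _).sub (i2.const_mul _)) (i3.sub i4),
    intervalIntegral.integral_sub (i1.const_mul _) (i2.const_mul _),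
    intervalIntegral.integral_sub i3 i4, intervalIntegral.integral_const_mul,
    intervalIntegral.integral_const_mul]
  simp only [TT, ContinuousMap.coe_mk]
  ring

lemma iter_bound (hq : Continuous q) (R : ℝ) (hR : 0 ≤ R) {Q : ℝ} (hQ0 : 0 ≤ Q)
    (hQ : ∀ s ∈ Icc (t₀ - R) (t₀ + R), |q s| ≤ Q)
    (F G : C(Icc (t₀ - R) (t₀ + R), ℝ)) :
    ∀ n : ℕ, ∀ x : Icc (t₀ - R) (t₀ + R),
      |((TT q t₀ α β hq R hR)^[n] F) x - ((TT q t₀ α β hq R hR)^[n] G) x| ≤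
        (2 * R * Q) ^ n * |(x : ℝ) - t₀| ^ n / n.factorial * dist F G := by
  intro n
  induction n with
  | zero =>
    intro x
    simpa using (Real.dist_eq (F x) (G x) ▸ ContinuousMap.dist_apply_le_dist x)
  | succ n ih =>
    intro x
    rw [Function.iterate_succ_apply', Function.iterate_succ_apply']
    set A := (TT q t₀ α β hq R hR)^[n] F with hA
    set B := (TT q t₀ α β hq R hR)^[n] G with hB
    rw [TT_sub]
    have hD : (0 : ℝ) ≤ dist F G := dist_nonneg
    set c : ℝ := 2 * R * Q * ((2 * R * Q) ^ n / n.factorial * dist F G) with hc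
    have hc0 : 0 ≤ c := by positivity
    have hsubJ : uIcc t₀ (x : ℝ) ⊆ Icc (t₀ - R) (t₀ + R) := uIcc_sub t₀ hR x.2
    have hbd : ∀ s ∈ uIcc t₀ (x : ℝ),
        |((x : ℝ) - s) * (q s * (ext t₀ R hR A s - ext t₀ R hR B s))| ≤
          c * |s - t₀| ^ n := by
      intro s hs
      have hsJ : s ∈ Icc (t₀ - R) (t₀ + R) := hsubJ hs
      have hxs : |(x : ℝ) - s| ≤ 2 * R := by
        rw [abs_sub_le_iff]
        obtain ⟨hx1, hx2⟩ := x.2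
        obtain ⟨hs1, hs2⟩ := hsJ
        constructor <;> linarith
      have hqs : |q s| ≤ Q := hQ s hsJ
      have hext : ext t₀ R hR A s - ext t₀ R hR B s = A ⟨s, hsJ⟩ - B ⟨s, hsJ⟩ := by
        rw [ext_apply t₀ R hR A hsJ, ext_apply t₀ R hR B hsJ]
      have hih := ih ⟨s, hsJ⟩
      calc |((x : ℝ) - s) * (q s * (ext t₀ R hR A s - ext t₀ R hR B s))|
          = |(x : ℝ) - s| * (|q s| * |ext t₀ R hR A s - ext t₀ R hR B s|) := by
            rw [abs_mul, abs_mul]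
        _ ≤ (2 * R) * (Q * ((2 * R * Q) ^ n * |s - t₀| ^ n / n.factorial * dist F G)) := by
            have h1 : |ext t₀ R hR A s - ext t₀ R hR B s| ≤
                (2 * R * Q) ^ n * |s - t₀| ^ n / n.factorial * dist F G := by
              rw [hext]; exact hih
            have h2 : 0 ≤ |q s| := abs_nonneg _
            have h3 : 0 ≤ |(x:ℝ) - s| := abs_nonneg _
            gcongr
        _ = c * |s - t₀| ^ n := by rw [hc]; ring
    have hkey := key_est hc0 n hbd
    refine hkey.trans ?_
    have hfac : ((n + 1).factorial : ℝ) = (n + 1) * n.factorial := by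
      rw [Nat.factorial_succ]; push_cast; ring
    rw [hfac]
    have hfn : (0:ℝ) < n.factorial := by exact_mod_cast Nat.factorial_pos n
    rw [hc]
    have habs : (0:ℝ) ≤ |(x:ℝ) - t₀| := abs_nonneg _
    have : c * |(x : ℝ) - t₀| ^ (n + 1) / (n + 1) =
        (2 * R * Q) ^ (n + 1) * |(x : ℝ) - t₀| ^ (n + 1) / ((n + 1) * n.factorial) *
          dist F G := by
      rw [hc]
      field_simp
      ring
    rw [← hc, this]

end DecayAux


namespace DecayAux

variable (q : ℝ → ℝ) (t₀ α β : ℝ)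

lemma exists_fixedPt (hq : Continuous q) (R : ℝ) (hR : 0 ≤ R) :
    ∃ F : C(Icc (t₀ - R) (t₀ + R), ℝ), TT q t₀ α β hq R hR F = F ∧
      ∀ G, TT q t₀ α β hq R hR G = G → G = F := by
  haveI hne : Nonempty (Icc (t₀ - R) (t₀ + R)) := ⟨⟨t₀, mem_J t₀ hR⟩⟩
  haveI : Nonempty C(Icc (t₀ - R) (t₀ + R), ℝ) := ⟨ContinuousMap.const _ 0⟩
  obtain ⟨Q₀, hQ₀⟩ := isCompact_Icc.exists_bound_of_continuousOn
    (hq.continuousOn (s := Icc (t₀ - R) (t₀ + R)))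
  set Q : ℝ := max Q₀ 0 with hQdef
  have hQ0 : 0 ≤ Q := le_max_right _ _
  have hQ : ∀ s ∈ Icc (t₀ - R) (t₀ + R), |q s| ≤ Q := fun s hs =>
    (hQ₀ s hs).trans (le_max_left _ _)
  obtain ⟨n, hn⟩ := ((FloorSemiring.tendsto_pow_div_factorial_atTop
    (2 * R * Q * R)).eventually_lt_const one_pos).exists
  set r : ℝ := (2 * R * Q) ^ n * R ^ n / n.factorial with hrdef
  have hrval : r = (2 * R * Q * R) ^ n / n.factorial := by
    rw [hrdef, ← mul_pow]
  have hr0 : 0 ≤ r := by positivity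
  have hr1 : r < 1 := by rw [hrval]; exact hn
  have hdist : ∀ F G : C(Icc (t₀ - R) (t₀ + R), ℝ),
      dist ((TT q t₀ α β hq R hR)^[n] F) ((TT q t₀ α β hq R hR)^[n] G) ≤ r * dist F G := by
    intro F G
    rw [ContinuousMap.dist_le (mul_nonneg hr0 dist_nonneg)]
    intro x
    rw [Real.dist_eq]
    refine (iter_bound q t₀ α β hq R hR hQ0 hQ F G n x).trans ?_
    have hxR : |(x : ℝ) - t₀| ≤ R := by
      rw [abs_sub_le_iff]
      obtain ⟨h1, h2⟩ := x.2
      constructor <;> linarith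
    have hA : (2 * R * Q) ^ n * |(x : ℝ) - t₀| ^ n / n.factorial ≤ r := by
      rw [hrdef]
      gcongr
    exact mul_le_mul_of_nonneg_right hA dist_nonneg
  have hK : ContractingWith ⟨r, hr0⟩ ((TT q t₀ α β hq R hR)^[n]) := by
    constructor
    · exact_mod_cast hr1
    · exact LipschitzWith.of_dist_le_mul hdist
  set F := ContractingWith.fixedPoint ((TT q t₀ α β hq R hR)^[n]) hK with hF
  have hFfix : ((TT q t₀ α β hq R hR)^[n]) F = F := hK.fixedPoint_isFixedPt
  have hTF : TT q t₀ α β hq R hR F = F := by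
    have h1 : Function.IsFixedPt ((TT q t₀ α β hq R hR)^[n])
        (TT q t₀ α β hq R hR F) := by
      show ((TT q t₀ α β hq R hR)^[n]) (TT q t₀ α β hq R hR F) = TT q t₀ α β hq R hR F
      rw [← Function.iterate_succ_apply, Function.iterate_succ_apply', hFfix]
    exact hK.fixedPoint_unique h1
  refine ⟨F, hTF, fun G hG => ?_⟩
  exact hK.fixedPoint_unique ((show Function.IsFixedPt (TT q t₀ α β hq R hR) G from hG).iterate n)

/-- The chosen fixed point on the interval of radius `R`. -/
noncomputable def FP (hq : Continuous q) (R : ℝ) (hR : 0 ≤ R) :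
    C(Icc (t₀ - R) (t₀ + R), ℝ) :=
  (exists_fixedPt q t₀ α β hq R hR).choose

lemma FP_fixed (hq : Continuous q) (R : ℝ) (hR : 0 ≤ R) :
    TT q t₀ α β hq R hR (FP q t₀ α β hq R hR) = FP q t₀ α β hq R hR :=
  (exists_fixedPt q t₀ α β hq R hR).choose_spec.1

lemma FP_unique (hq : Continuous q) (R : ℝ) (hR : 0 ≤ R)
    (G : C(Icc (t₀ - R) (t₀ + R), ℝ)) (hG : TT q t₀ α β hq R hR G = G) :
    G = FP q t₀ α β hq R hR :=
  (exists_fixedPt q t₀ α β hq R hR).choose_spec.2 G hG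

lemma FP_agree (hq : Continuous q) {R R' : ℝ} (hR : 0 ≤ R) (hRR : R ≤ R') {x : ℝ}
    (hx : x ∈ Icc (t₀ - R) (t₀ + R)) (hx' : x ∈ Icc (t₀ - R') (t₀ + R')) :
    FP q t₀ α β hq R' (hR.trans hRR) ⟨x, hx'⟩ = FP q t₀ α β hq R hR ⟨x, hx⟩ := by
  have hR' : 0 ≤ R' := hR.trans hRR
  have hsub : Icc (t₀ - R) (t₀ + R) ⊆ Icc (t₀ - R') (t₀ + R') :=
    Icc_subset_Icc (by linarith) (by linarith)
  set F' := FP q t₀ α β hq R' hR' with hF'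
  set ι : C(Icc (t₀ - R) (t₀ + R), Icc (t₀ - R') (t₀ + R')) :=
    ⟨fun z => ⟨(z : ℝ), hsub z.2⟩, by
      exact Continuous.subtype_mk continuous_subtype_val _⟩ with hι
  have hfix : TT q t₀ α β hq R hR (F'.comp ι) = F'.comp ι := by
    ext z
    have hzJ' : (z : ℝ) ∈ Icc (t₀ - R') (t₀ + R') := hsub z.2
    have hrhs : (F'.comp ι) z = TT q t₀ α β hq R' hR' F' ⟨(z : ℝ), hzJ'⟩ := by
      rw [FP_fixed]
      rfl
    rw [hrhs]
    simp only [TT, ContinuousMap.coe_mk]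
    have hcong1 : (∫ s in t₀..(z : ℝ), q s * ext t₀ R hR (F'.comp ι) s) =
        ∫ s in t₀..(z : ℝ), q s * ext t₀ R' hR' F' s := by
      refine intervalIntegral.integral_congr fun s hs => ?_
      have hsJ : s ∈ Icc (t₀ - R) (t₀ + R) := uIcc_sub t₀ hR z.2 hs
      rw [ext_apply t₀ R hR _ hsJ, ext_apply t₀ R' hR' _ (hsub hsJ)]
      rfl
    have hcong2 : (∫ s in t₀..(z : ℝ), s * (q s * ext t₀ R hR (F'.comp ι) s)) =
        ∫ s in t₀..(z : ℝ), s * (q s * ext t₀ R' hR' F' s) := by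
      refine intervalIntegral.integral_congr fun s hs => ?_
      have hsJ : s ∈ Icc (t₀ - R) (t₀ + R) := uIcc_sub t₀ hR z.2 hs
      rw [ext_apply t₀ R hR _ hsJ, ext_apply t₀ R' hR' _ (hsub hsJ)]
      rfl
    rw [hcong1, hcong2]
  have := FP_unique q t₀ α β hq R hR (F'.comp ι) hfix
  have heval := congrArg (fun G : C(Icc (t₀ - R) (t₀ + R), ℝ) => G ⟨x, hx⟩) this
  exact heval

lemma mem_Jx (x : ℝ) : x ∈ Icc (t₀ - (|x - t₀| + 1)) (t₀ + (|x - t₀| + 1)) := by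
  have h2 := le_abs_self (x - t₀)
  have h3 := neg_abs_le (x - t₀)
  constructor <;> linarith

/-- The global solution of the integral equation. -/
noncomputable def sol (hq : Continuous q) : ℝ → ℝ := fun x =>
  FP q t₀ α β hq (|x - t₀| + 1) (by positivity) ⟨x, mem_Jx t₀ x⟩

lemma sol_eq (hq : Continuous q) {R x : ℝ} (hR : 0 ≤ R)
    (hx : x ∈ Icc (t₀ - R) (t₀ + R)) :
    sol q t₀ α β hq x = FP q t₀ α β hq R hR ⟨x, hx⟩ := by
  set R' : ℝ := max R (|x - t₀| + 1) with hR'def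
  have hR'1 : R ≤ R' := le_max_left _ _
  have hR'2 : |x - t₀| + 1 ≤ R' := le_max_right _ _
  have hR'0 : 0 ≤ R' := hR.trans hR'1
  have hx2 : x ∈ Icc (t₀ - (|x - t₀| + 1)) (t₀ + (|x - t₀| + 1)) := mem_Jx t₀ x
  have hx' : x ∈ Icc (t₀ - R') (t₀ + R') := by
    obtain ⟨h1, h2⟩ := hx
    constructor <;> linarith
  have e1 := FP_agree q t₀ α β hq (by positivity : (0:ℝ) ≤ |x - t₀| + 1) hR'2 hx2 hx'
  have e2 := FP_agree q t₀ α β hq hR hR'1 hx hx'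
  show FP q t₀ α β hq (|x - t₀| + 1) (by positivity) ⟨x, hx2⟩ = _
  have hcast : FP q t₀ α β hq R' ((by positivity : (0:ℝ) ≤ |x - t₀| + 1).trans hR'2) ⟨x, hx'⟩ =
      FP q t₀ α β hq R' (hR.trans hR'1) ⟨x, hx'⟩ := rfl
  rw [← e1, hcast, e2]

lemma sol_inteq (hq : Continuous q) (x : ℝ) :
    sol q t₀ α β hq x = α + β * (x - t₀) +
      (x * ∫ s in t₀..x, q s * sol q t₀ α β hq s) -
      ∫ s in t₀..x, s * (q s * sol q t₀ α β hq s) := by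
  set R : ℝ := |x - t₀| + 1 with hRdef
  have hR : 0 ≤ R := by positivity
  have hx : x ∈ Icc (t₀ - R) (t₀ + R) := mem_Jx t₀ x
  rw [sol_eq q t₀ α β hq hR hx]
  conv_lhs => rw [← FP_fixed q t₀ α β hq R hR]
  simp only [TT, ContinuousMap.coe_mk]
  have hcong1 : (∫ s in t₀..x, q s * ext t₀ R hR (FP q t₀ α β hq R hR) s) =
      ∫ s in t₀..x, q s * sol q t₀ α β hq s := by
    refine intervalIntegral.integral_congr fun s hs => ?_
    have hsJ : s ∈ Icc (t₀ - R) (t₀ + R) := uIcc_sub t₀ hR hx hs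
    rw [ext_apply t₀ R hR _ hsJ, sol_eq q t₀ α β hq hR hsJ]
  have hcong2 : (∫ s in t₀..x, s * (q s * ext t₀ R hR (FP q t₀ α β hq R hR) s)) =
      ∫ s in t₀..x, s * (q s * sol q t₀ α β hq s) := by
    refine intervalIntegral.integral_congr fun s hs => ?_
    have hsJ : s ∈ Icc (t₀ - R) (t₀ + R) := uIcc_sub t₀ hR hx hs
    rw [ext_apply t₀ R hR _ hsJ, sol_eq q t₀ α β hq hR hsJ]
  rw [hcong1, hcong2]

lemma sol_continuous (hq : Continuous q) : Continuous (sol q t₀ α β hq) := by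
  rw [continuous_iff_continuousAt]
  intro x₀
  set R : ℝ := |x₀ - t₀| + 1 with hRdef
  have hR : 0 ≤ R := by positivity
  have h2 := le_abs_self (x₀ - t₀)
  have h3 := neg_abs_le (x₀ - t₀)
  have hopen : Ioo (t₀ - R) (t₀ + R) ∈ nhds x₀ :=
    Ioo_mem_nhds (by simp only [hRdef]; linarith) (by simp only [hRdef]; linarith)
  refine ContinuousAt.congr ((ext_continuous t₀ R hR
    (FP q t₀ α β hq R hR)).continuousAt) ?_
  filter_upwards [hopen] with s hs
  have hsJ : s ∈ Icc (t₀ - R) (t₀ + R) := Ioo_subset_Icc_self hs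
  rw [sol_eq q t₀ α β hq hR hsJ, ext_apply t₀ R hR _ hsJ]

/-- Global existence for the second order linear ODE `y'' = q y`. -/
theorem exists_global_solution (hq : Continuous q) :
    ∃ y yd : ℝ → ℝ, y t₀ = α ∧ yd t₀ = β ∧ (∀ x, HasDerivAt y (yd x) x) ∧
      (∀ x, HasDerivAt yd (q x * y x) x) := by
  set y := sol q t₀ α β hq with hy
  have hycont : Continuous y := sol_continuous q t₀ α β hq
  have hint : Continuous fun s => q s * y s := hq.mul hycont
  have hint2 : Continuous fun s => s * (q s * y s) := continuous_id.mul hint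
  set g : ℝ → ℝ := fun x => ∫ s in t₀..x, q s * y s with hg
  set h : ℝ → ℝ := fun x => ∫ s in t₀..x, s * (q s * y s) with hh
  have hgder : ∀ x, HasDerivAt g (q x * y x) x := by
    intro x
    exact intervalIntegral.integral_hasDerivAt_right (hint.intervalIntegrable _ _)
      (hint.stronglyMeasurable.stronglyMeasurableAtFilter) hint.continuousAt
  have hhder : ∀ x, HasDerivAt h (x * (q x * y x)) x := by
    intro x
    exact intervalIntegral.integral_hasDerivAt_right (hint2.intervalIntegrable _ _)
      (hint2.stronglyMeasurable.stronglyMeasurableAtFilter) hint2.continuousAt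
  have hyeq : y = fun x => α + β * (x - t₀) + (x * g x) - h x := by
    funext x
    exact sol_inteq q t₀ α β hq x
  set yd : ℝ → ℝ := fun x => β + g x with hyd
  have hyder : ∀ x, HasDerivAt y (yd x) x := by
    intro x
    rw [hyeq]
    have h1 : HasDerivAt (fun x : ℝ => α + β * (x - t₀)) β x := by
      simpa using (((hasDerivAt_id x).sub_const t₀).const_mul β).const_add α
    have h2 : HasDerivAt (fun x => x * g x) (1 * g x + x * (q x * y x)) x :=
      (hasDerivAt_id x).mul (hgder x)
    have h3 := (h1.add h2).sub (hhder x)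
    convert h3 using 1
    show β + g x = _
    ring
    all_goals rfl
  have hydder : ∀ x, HasDerivAt yd (q x * y x) x := fun x => (hgder x).const_add β
  refine ⟨y, yd, ?_, ?_, hyder, hydder⟩
  · rw [hyeq]
    simp [hg, hh]
  · simp [hyd, hg]

end DecayAux


namespace DecayAux

/-- Monotonicity from a derivative bound on an interval. -/
lemma mono_on_Icc {f f' : ℝ → ℝ} {b a : ℝ}
    (hcont : ContinuousOn f (Icc b a))
    (hd : ∀ x ∈ Ioo b a, HasDerivAt f (f' x) x)
    (hpos : ∀ x ∈ Ioo b a, 0 ≤ f' x) : MonotoneOn f (Icc b a) := by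
  refine monotoneOn_of_deriv_nonneg (convex_Icc b a) hcont ?_ ?_
  · intro x hx
    rw [interior_Icc] at hx
    exact (hd x hx).differentiableAt.differentiableWithinAt
  · intro x hx
    rw [interior_Icc] at hx
    rw [(hd x hx).deriv]
    exact hpos x hx

lemma anti_on_Icc {f f' : ℝ → ℝ} {b a : ℝ}
    (hcont : ContinuousOn f (Icc b a))
    (hd : ∀ x ∈ Ioo b a, HasDerivAt f (f' x) x)
    (hneg : ∀ x ∈ Ioo b a, f' x ≤ 0) : AntitoneOn f (Icc b a) := by
  refine antitoneOn_of_deriv_nonpos (convex_Icc b a) hcont ?_ ?_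
  · intro x hx
    rw [interior_Icc] at hx
    exact (hd x hx).differentiableAt.differentiableWithinAt
  · intro x hx
    rw [interior_Icc] at hx
    rw [(hd x hx).deriv]
    exact hneg x hx

lemma strictMono_on_Icc {f f' : ℝ → ℝ} {b a : ℝ}
    (hcont : ContinuousOn f (Icc b a))
    (hd : ∀ x ∈ Ioo b a, HasDerivAt f (f' x) x)
    (hpos : ∀ x ∈ Ioo b a, 0 < f' x) : StrictMonoOn f (Icc b a) := by
  refine strictMonoOn_of_deriv_pos (convex_Icc b a) hcont ?_
  intro x hx
  rw [interior_Icc] at hx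
  rw [(hd x hx).deriv]
  exact hpos x hx

/-- If `f` has negative derivative at `b`, then `f` is bigger slightly to the left. -/
lemma left_gt_of_deriv_neg {f : ℝ → ℝ} {f' b : ℝ} (h : HasDerivAt f f' b)
    (h' : f' < 0) : ∀ᶠ s in nhdsWithin b (Iio b), f b < f s := by
  have h1 := hasDerivAt_iff_tendsto_slope.mp h
  have h2 : ∀ᶠ s in nhdsWithin b {b}ᶜ, slope f b s < 0 := h1.eventually_lt_const h'
  have h3 : nhdsWithin b (Iio b) ≤ nhdsWithin b {b}ᶜ :=
    nhdsWithin_mono b fun s hs => ne_of_lt hs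
  filter_upwards [h3 h2, self_mem_nhdsWithin] with s hs hsb
  have hsb' : s - b < 0 := sub_neg.mpr hsb
  have hslope : slope f b s = (f s - f b) / (s - b) := by
    rw [slope_def_field]
  rw [hslope] at hs
  rcases div_neg_iff.mp hs with ⟨h4, h5⟩ | ⟨h4, h5⟩
  · linarith
  · linarith

/-- Backward uniqueness for the second order linear ODE via an energy argument. -/
lemma backward_unique (q : ℝ → ℝ) (hq : Continuous q) {b a : ℝ} (hba : b < a)
    {y yd z zd : ℝ → ℝ}
    (hyc : ContinuousOn y (Icc b a)) (hydc : ContinuousOn yd (Icc b a))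
    (hzc : ContinuousOn z (Icc b a)) (hzdc : ContinuousOn zd (Icc b a))
    (hy : ∀ x ∈ Ioo b a, HasDerivAt y (yd x) x)
    (hyd : ∀ x ∈ Ioo b a, HasDerivAt yd (q x * y x) x)
    (hz : ∀ x ∈ Ioo b a, HasDerivAt z (zd x) x)
    (hzd : ∀ x ∈ Ioo b a, HasDerivAt zd (q x * z x) x)
    (hya : y a = z a) (hyda : yd a = zd a) :
    ∀ x ∈ Icc b a, y x = z x := by
  obtain ⟨Q₀, hQ₀⟩ := isCompact_Icc.exists_bound_of_continuousOn
    (hq.continuousOn (s := Icc b a))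
  set C : ℝ := 1 + max Q₀ 0 with hC
  have hC0 : 0 < C := by positivity
  have hCq : ∀ x ∈ Icc b a, |1 + q x| ≤ C := by
    intro x hx
    have h1 : |q x| ≤ max Q₀ 0 := (hQ₀ x hx).trans (le_max_left _ _)
    rw [abs_le] at h1 ⊢
    constructor <;> [linarith [h1.1]; linarith [h1.2]]
  set E : ℝ → ℝ := fun x => (y x - z x) ^ 2 + (yd x - zd x) ^ 2 with hE
  set G : ℝ → ℝ := fun x => E x * Real.exp (C * x) with hG
  have hGd : ∀ x ∈ Ioo b a, HasDerivAt G
      ((2 * (y x - z x) ^ 1 * (yd x - zd x) + 2 * (yd x - zd x) ^ 1 * (q x * y x - q x * z x)) *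
        Real.exp (C * x) + E x * (Real.exp (C * x) * C)) x := by
    intro x hx
    have hd1 : HasDerivAt (fun t => y t - z t) (yd x - zd x) x := (hy x hx).sub (hz x hx)
    have hd2 : HasDerivAt (fun t => yd t - zd t) (q x * y x - q x * z x) x :=
      (hyd x hx).sub (hzd x hx)
    have hd3 : HasDerivAt E
        (2 * (y x - z x) ^ 1 * (yd x - zd x) + 2 * (yd x - zd x) ^ 1 *
          (q x * y x - q x * z x)) x := by
      have := (hd1.pow 2).add (hd2.pow 2)
      exact this.congr_deriv (by simp)
    have hd4 : HasDerivAt (fun t => Real.exp (C * t)) (Real.exp (C * x) * C) x := by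
      have h1 : HasDerivAt (fun t : ℝ => C * t) C x := by
        simpa using (hasDerivAt_id x).const_mul C
      exact h1.exp
    exact hd3.mul hd4
  have hGnonneg : ∀ x ∈ Ioo b a,
      0 ≤ (2 * (y x - z x) ^ 1 * (yd x - zd x) + 2 * (yd x - zd x) ^ 1 *
        (q x * y x - q x * z x)) * Real.exp (C * x) + E x * (Real.exp (C * x) * C) := by
    intro x hx
    have hexp : 0 < Real.exp (C * x) := Real.exp_pos _
    set d : ℝ := y x - z x with hd
    set d' : ℝ := yd x - zd x with hd'
    have hEx : E x = d ^ 2 + d' ^ 2 := rfl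
    have hqb := hCq x (Ioo_subset_Icc_self hx)
    rw [abs_le] at hqb
    have key : 0 ≤ 2 * d * d' * (1 + q x) + C * (d ^ 2 + d' ^ 2) := by
      nlinarith [mul_nonneg (by linarith [hqb.2] : 0 ≤ C - (1 + q x)) (sq_nonneg (d - d')),
        mul_nonneg (by linarith [hqb.1] : 0 ≤ C + (1 + q x)) (sq_nonneg (d + d'))]
    have hrw : (2 * d ^ 1 * d' + 2 * d' ^ 1 * (q x * y x - q x * z x)) *
        Real.exp (C * x) + E x * (Real.exp (C * x) * C) =
        (2 * d * d' * (1 + q x) + C * (d ^ 2 + d' ^ 2)) * Real.exp (C * x) := by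
      rw [hEx]
      have : q x * y x - q x * z x = q x * d := by rw [hd]; ring
      rw [this]
      ring
    rw [hrw]
    exact mul_nonneg key hexp.le
  have hEc : ContinuousOn E (Icc b a) :=
    ((hyc.sub hzc).pow 2).add ((hydc.sub hzdc).pow 2)
  have hGc : ContinuousOn G (Icc b a) :=
    hEc.mul (Real.continuous_exp.comp (continuous_const.mul continuous_id)).continuousOn
  have hmono : MonotoneOn G (Icc b a) :=
    mono_on_Icc hGc hGd hGnonneg
  have hEa : E a = 0 := by
    simp only [hE, hya, hyda]
    ring
  have hGa : G a = 0 := by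
    rw [hG]
    simp only [hEa]
    ring_nf
  intro x hx
  have hGle : G x ≤ G a := hmono hx (right_mem_Icc.mpr hba.le) hx.2
  have hGge : 0 ≤ G x := by
    have : 0 ≤ E x := by positivity
    exact mul_nonneg this (Real.exp_pos _).le
  have hGx : G x = 0 := le_antisymm (hGa ▸ hGle) hGge
  have hEx : E x = 0 := by
    have hexp : Real.exp (C * x) ≠ 0 := (Real.exp_pos _).ne'
    have := mul_eq_zero.mp hGx
    tauto
  have h1 : (y x - z x) ^ 2 = 0 := by
    have h2 : (0:ℝ) ≤ (y x - z x) ^ 2 := sq_nonneg _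
    have h3 : (0:ℝ) ≤ (yd x - zd x) ^ 2 := sq_nonneg _
    have := hEx
    simp only [hE] at this
    nlinarith
  have := sq_eq_zero_iff.mp h1
  linarith [this]

end DecayAux


namespace DecayAux

lemma strictAnti_on_Icc {f f' : ℝ → ℝ} {b a : ℝ}
    (hcont : ContinuousOn f (Icc b a))
    (hd : ∀ x ∈ Ioo b a, HasDerivAt f (f' x) x)
    (hneg : ∀ x ∈ Ioo b a, f' x < 0) : StrictAntiOn f (Icc b a) := by
  refine strictAntiOn_of_deriv_neg (convex_Icc b a) hcont ?_
  intro x hx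
  rw [interior_Icc] at hx
  rw [(hd x hx).deriv]
  exact hneg x hx

/-- The comparison estimates for the solution with `y₁ a = 1`, `y₁' a = 0` on `(-∞, a]`,
where `q ≥ M² > 0`. -/
lemma comparison (q : ℝ → ℝ) (hq : Continuous q) (a M : ℝ) (hM : 0 < M)
    (hqM : ∀ x ≤ a, M ^ 2 ≤ q x)
    (y₁ y₁d : ℝ → ℝ) (hy₁a : y₁ a = 1) (hy₁da : y₁d a = 0)
    (hy₁ : ∀ x, HasDerivAt y₁ (y₁d x) x)
    (hy₁d : ∀ x, HasDerivAt y₁d (q x * y₁ x) x) :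
    (∀ x ≤ a, 1 ≤ y₁ x) ∧ (∀ x ≤ a, y₁d x ≤ 0) ∧
      (∀ x ≤ a, Real.cosh (M * (x - a)) ≤ y₁ x) := by
  have hy₁c : Continuous y₁ := by
    rw [continuous_iff_continuousAt]; exact fun x => (hy₁ x).continuousAt
  have hy₁dc : Continuous y₁d := by
    rw [continuous_iff_continuousAt]; exact fun x => (hy₁d x).continuousAt
  -- Step 0: a small interval to the left of `a` where `y₁ > 1` strictly below `a`
  have hconta : ContinuousAt y₁ a := hy₁c.continuousAt
  obtain ⟨δ, hδ0, hδ⟩ := Metric.continuousAt_iff.mp hconta (1 / 2) (by norm_num)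
  set b₀ : ℝ := a - δ / 2 with hb₀
  have hb₀a : b₀ < a := by rw [hb₀]; linarith
  have hhalf : ∀ t ∈ Icc b₀ a, (1:ℝ) / 2 ≤ y₁ t := by
    intro t ht
    have hdist : dist t a < δ := by
      rw [Real.dist_eq, abs_lt]
      obtain ⟨h1, h2⟩ := ht
      have h1' : a - δ / 2 ≤ t := h1
      constructor <;> linarith
    have := hδ hdist
    rw [Real.dist_eq, hy₁a, abs_lt] at this
    linarith [this.1]
  have hstrd : StrictMonoOn y₁d (Icc b₀ a) := by
    refine strictMono_on_Icc hy₁dc.continuousOn (fun t _ => hy₁d t) ?_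
    intro t ht
    have h1 : M ^ 2 ≤ q t := hqM t ht.2.le
    have h2 : (1:ℝ)/2 ≤ y₁ t := hhalf t (Ioo_subset_Icc_self ht)
    nlinarith
  have hstrneg : ∀ t ∈ Ico b₀ a, y₁d t < 0 := by
    intro t ht
    have := hstrd (Ico_subset_Icc_self ht) (right_mem_Icc.mpr hb₀a.le) ht.2
    rwa [hy₁da] at this
  have hanti : StrictAntiOn y₁ (Icc b₀ a) := by
    refine strictAnti_on_Icc hy₁c.continuousOn (fun t _ => hy₁ t) ?_
    intro t ht
    exact hstrneg t (Ioo_subset_Ico_self ht)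
  have hb₀T : ∀ s ∈ Icc b₀ a, 1 ≤ y₁ s := by
    intro s hs
    rcases eq_or_lt_of_le hs.2 with rfl | hlt
    · exact hy₁a.ge
    · have := hanti hs (right_mem_Icc.mpr hb₀a.le) hlt
      rw [hy₁a] at this
      exact this.le
  -- Main claim (i)
  have main1 : ∀ x ≤ a, 1 ≤ y₁ x := by
    intro x hx
    rcases le_or_gt b₀ x with hxb₀ | hxb₀
    · exact hb₀T x ⟨hxb₀, hx⟩
    set T : Set ℝ := {t ∈ Icc x a | ∀ s ∈ Icc t a, 1 ≤ y₁ s} with hT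
    have hb₀mem : b₀ ∈ T := ⟨⟨hxb₀.le, hb₀a.le⟩, hb₀T⟩
    have hTne : T.Nonempty := ⟨b₀, hb₀mem⟩
    have hbdd : BddBelow T := ⟨x, fun t ht => ht.1.1⟩
    set b : ℝ := sInf T with hbdef
    have hbx : x ≤ b := le_csInf hTne fun t ht => ht.1.1
    have hbb₀ : b ≤ b₀ := csInf_le hbdd hb₀mem
    have hba : b < a := lt_of_le_of_lt hbb₀ hb₀a
    have hbT : ∀ s ∈ Icc b a, 1 ≤ y₁ s := by
      intro s hs
      rcases eq_or_lt_of_le hs.1 with heq | hlt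
      · rw [← heq]
        have hev : ∀ᶠ t in nhdsWithin b (Ioi b), 1 ≤ y₁ t := by
          have hIoo : Ioo b a ∈ nhdsWithin b (Ioi b) :=
            Ioo_mem_nhdsGT_of_mem (left_mem_Ico.mpr hba)
          filter_upwards [hIoo] with t ht
          obtain ⟨t', ht'T, ht'lt⟩ := exists_lt_of_csInf_lt hTne (show sInf T < t from ht.1)
          exact ht'T.2 t ⟨ht'lt.le, ht.2.le⟩
        exact ge_of_tendsto
          (hy₁c.continuousAt.continuousWithinAt (s := Ioi b)) hev
      · obtain ⟨t', ht'T, ht'lt⟩ := exists_lt_of_csInf_lt hTne hlt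
        exact ht'T.2 s ⟨ht'lt.le, hs.2⟩
    have hble : b ≤ x := by
      by_contra hcon
      push_neg at hcon
      have hy₁db : y₁d b < 0 := by
        have hstr2 : StrictMonoOn y₁d (Icc b a) := by
          refine strictMono_on_Icc hy₁dc.continuousOn (fun t _ => hy₁d t) ?_
          intro t ht
          have h1 : M ^ 2 ≤ q t := hqM t ht.2.le
          have h2 : 1 ≤ y₁ t := hbT t (Ioo_subset_Icc_self ht)
          nlinarith
        have := hstr2 (left_mem_Icc.mpr hba.le) (right_mem_Icc.mpr hba.le) hba
        rwa [hy₁da] at this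
      have hev := left_gt_of_deriv_neg (hy₁ b) hy₁db
      obtain ⟨l, hl, hsub⟩ := (mem_nhdsLT_iff_exists_Ioo_subset' hcon).mp hev
      set s₀ : ℝ := max x ((l + b) / 2) with hs₀
      have hls₀ : l < s₀ := lt_of_lt_of_le (by rw [mem_Iio] at hl; linarith)
        (le_max_right _ _)
      have hs₀b : s₀ < b := max_lt hcon (by rw [mem_Iio] at hl; linarith)
      have hs₀T : s₀ ∈ T := by
        refine ⟨⟨le_max_left _ _, by linarith⟩, ?_⟩
        intro s hs
        rcases lt_or_ge s b with hsb | hsb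
        · have hsIoo : s ∈ Ioo l b := ⟨lt_of_lt_of_le hls₀ hs.1, hsb⟩
          have := hsub hsIoo
          have hyb : 1 ≤ y₁ b := hbT b (left_mem_Icc.mpr hba.le)
          exact hyb.trans (le_of_lt this)
        · exact hbT s ⟨hsb, hs.2⟩
      have := csInf_le hbdd hs₀T
      rw [← hbdef] at this
      linarith
    exact hbT x ⟨hble, hx⟩
  -- (ii)
  have main2 : ∀ x ≤ a, y₁d x ≤ 0 := by
    intro x hx
    rcases eq_or_lt_of_le hx with rfl | hlt
    · exact hy₁da.le
    have hstr2 : StrictMonoOn y₁d (Icc x a) := by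
      refine strictMono_on_Icc hy₁dc.continuousOn (fun t _ => hy₁d t) ?_
      intro t ht
      have h1 : M ^ 2 ≤ q t := hqM t ht.2.le
      have h2 : 1 ≤ y₁ t := main1 t ht.2.le
      nlinarith
    have := hstr2 (left_mem_Icc.mpr hlt.le) (right_mem_Icc.mpr hlt.le) hlt
    rw [hy₁da] at this
    exact this.le
  -- (iii): comparison with cosh
  refine ⟨main1, main2, ?_⟩
  intro x hx
  rcases eq_or_lt_of_le hx with rfl | hlt
  · simp [hy₁a]
  set c : ℝ → ℝ := fun t => Real.cosh (M * (t - a)) with hc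
  set cd : ℝ → ℝ := fun t => Real.sinh (M * (t - a)) * M with hcd
  have hlin : ∀ t : ℝ, HasDerivAt (fun t : ℝ => M * (t - a)) M t := by
    intro t
    simpa using ((hasDerivAt_id t).sub_const a).const_mul M
  have hcder : ∀ t, HasDerivAt c (cd t) t := fun t => (Real.hasDerivAt_cosh _).comp t (hlin t)
  have hcdder : ∀ t, HasDerivAt cd (Real.cosh (M * (t - a)) * M * M) t := by
    intro t
    exact ((Real.hasDerivAt_sinh (M * (t - a))).comp t (hlin t)).mul_const M
  set W : ℝ → ℝ := fun t => y₁d t * c t - y₁ t * cd t with hW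
  have hWder : ∀ t, HasDerivAt W
      ((q t * y₁ t) * c t + y₁d t * cd t -
        (y₁d t * cd t + y₁ t * (Real.cosh (M * (t - a)) * M * M))) t := by
    intro t
    exact ((hy₁d t).mul (hcder t)).sub ((hy₁ t).mul (hcdder t))
  have hWa : W a = 0 := by
    simp [hW, hc, hcd, hy₁a, hy₁da]
  have hcc : Continuous c := by
    rw [continuous_iff_continuousAt]; exact fun t => (hcder t).continuousAt
  have hcdc : Continuous cd := by
    rw [continuous_iff_continuousAt]; exact fun t => (hcdder t).continuousAt
  have hWcont : Continuous W := (hy₁dc.mul hcc).sub (hy₁c.mul hcdc)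
  have hWle : ∀ t ≤ a, W t ≤ 0 := by
    intro t ht
    rcases eq_or_lt_of_le ht with rfl | hlt'
    · exact hWa.le
    have hmono : MonotoneOn W (Icc t a) := by
      refine mono_on_Icc hWcont.continuousOn (fun s _ => hWder s) ?_
      intro s hs
      have h1 : M ^ 2 ≤ q s := hqM s hs.2.le
      have h2 : 1 ≤ y₁ s := main1 s hs.2.le
      have key : 0 ≤ (q s - M ^ 2) * y₁ s * Real.cosh (M * (s - a)) :=
        mul_nonneg (mul_nonneg (by linarith) (by linarith))
          (Real.cosh_pos (M * (s - a))).le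
      have hcs : c s = Real.cosh (M * (s - a)) := rfl
      rw [hcs]
      nlinarith [key]
    have := hmono (left_mem_Icc.mpr hlt'.le) (right_mem_Icc.mpr hlt'.le) hlt'.le
    rw [hWa] at this
    exact this
  -- ratio y₁ / c is antitone
  set r : ℝ → ℝ := fun t => y₁ t / c t with hr
  have hcpos : ∀ t, 0 < c t := fun t => Real.cosh_pos (M * (t - a))
  have hrder : ∀ t, HasDerivAt r ((y₁d t * c t - y₁ t * cd t) / (c t) ^ 2) t := by
    intro t
    exact (hy₁ t).div (hcder t) (hcpos t).ne'
  have hranti : AntitoneOn r (Icc x a) := by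
    refine anti_on_Icc ?_ (fun s _ => hrder s) ?_
    · exact (hy₁c.div hcc fun t => (hcpos t).ne').continuousOn
    · intro s hs
      have h1 : y₁d s * c s - y₁ s * cd s ≤ 0 := hWle s hs.2.le
      have h2 : (0:ℝ) ≤ (c s) ^ 2 := sq_nonneg _
      exact div_nonpos_iff.mpr (Or.inr ⟨h1, h2⟩)
  have hra : r a = 1 := by
    simp [hr, hc, hy₁a]
  have hr1 : (1:ℝ) ≤ r x := by
    have h := hranti (left_mem_Icc.mpr hlt.le) (right_mem_Icc.mpr hlt.le) hlt.le
    rwa [hra] at h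
  have hcx : 0 < c x := hcpos x
  have hfin : c x ≤ y₁ x := (one_le_div hcx).mp hr1
  exact hfin

end DecayAux




open Filter Real

open DecayAux

/-- Let `q̃ : ℝ → ℝ` be continuous with `q̃(x) → ∞` as `x → -∞`. Then for
every `M > 0` there exist a twice continuously differentiable solution `y` of
`-y'' + q̃·y = 0` on `ℝ` and a point `x₀ < 0` such that `y` is strictly positive on
`(-∞, x₀)` and `|y(x)| ≤ e^{-M·|x|}` for all `x < x₀`. -/
theorem decaying_solution_at_minus_infinity
    (qt : ℝ → ℝ) (hqt : Continuous qt)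
    (htop : Filter.Tendsto qt Filter.atBot Filter.atTop)
    (M : ℝ) (hM : 0 < M) :
    ∃ y : ℝ → ℝ, ContDiff ℝ 2 y ∧
      (∀ x : ℝ, -(deriv (deriv y) x) + qt x * y x = 0) ∧
      ∃ x₀ : ℝ, x₀ < 0 ∧
        (∀ x : ℝ, x < x₀ → 0 < y x) ∧
        (∀ x : ℝ, x < x₀ → |y x| ≤ Real.exp (-M * |x|)) := by
  -- a point to the left of which qt ≥ M²
  obtain ⟨a₀, ha₀⟩ := Filter.eventually_atBot.mp (htop.eventually_ge_atTop (M ^ 2))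
  set a : ℝ := min a₀ (-1) with hadef
  have haneg : a ≤ -1 := min_le_right _ _
  have hqM : ∀ x ≤ a, M ^ 2 ≤ qt x := fun x hx =>
    ha₀ x (hx.trans (min_le_left _ _))
  -- the growing solution y₁
  obtain ⟨y₁, y₁d, hy₁a, hy₁da, hy₁, hy₁d⟩ := exists_global_solution qt a 1 0 hqt
  obtain ⟨hge1, hd0, hcosh⟩ := comparison qt hqt a M hM hqM y₁ y₁d hy₁a hy₁da hy₁ hy₁d
  have hy₁c : Continuous y₁ := by
    rw [continuous_iff_continuousAt]; exact fun x => (hy₁ x).continuousAt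
  have hy₁dc : Continuous y₁d := by
    rw [continuous_iff_continuousAt]; exact fun x => (hy₁d x).continuousAt
  -- lower bound by an exponential
  have hexp_le : ∀ s ≤ a, Real.exp (M * (a - s)) / 2 ≤ y₁ s := by
    intro s hs
    refine le_trans ?_ (hcosh s hs)
    rw [Real.cosh_eq]
    have h1 : Real.exp (M * (s - a)) > 0 := Real.exp_pos _
    have h2 : -(M * (s - a)) = M * (a - s) := by ring
    rw [← h2]
    linarith [Real.exp_pos (M * (s - a))]
  have hy₁pos : ∀ s ≤ a, (0:ℝ) < y₁ s := fun s hs => lt_of_lt_of_le one_pos (hge1 s hs)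
  have hinv : ∀ s ≤ a, (y₁ s)⁻¹ ≤ 2 * Real.exp (M * (s - a)) := by
    intro s hs
    have h0 : (0:ℝ) < Real.exp (M * (a - s)) / 2 := by positivity
    have h1 := inv_anti₀ h0 (hexp_le s hs)
    refine h1.trans_eq ?_
    rw [inv_div, div_eq_mul_inv, ← Real.exp_neg]
    have : -(M * (a - s)) = M * (s - a) := by ring
    rw [this]
  -- the integrand f = y₁⁻²
  set f : ℝ → ℝ := fun s => ((y₁ s) ^ 2)⁻¹ with hfdef
  have hfnonneg : ∀ s, 0 ≤ f s := fun s => inv_nonneg.mpr (sq_nonneg _)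
  have hfmeas : Measurable f := ((hy₁c.measurable).pow_const 2).inv
  have hfle : ∀ s ≤ a, f s ≤ 4 * Real.exp (2 * M * (s - a)) := by
    intro s hs
    have h1 : f s = ((y₁ s)⁻¹) ^ 2 := by rw [hfdef, inv_pow]
    rw [h1]
    have h2 : ((y₁ s)⁻¹) ^ 2 ≤ (2 * Real.exp (M * (s - a))) ^ 2 :=
      pow_le_pow_left₀ (inv_nonneg.mpr (hy₁pos s hs).le) (hinv s hs) 2
    refine h2.trans_eq ?_
    rw [mul_pow, sq (Real.exp _), ← Real.exp_add]
    have harg : M * (s - a) + M * (s - a) = 2 * M * (s - a) := by ring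
    rw [harg]
    norm_num
  have hfint : ∀ x ≤ a, IntegrableOn f (Iic x) := by
    intro x hx
    have hgint : IntegrableOn (fun s => 4 * Real.exp (2 * M * (s - a))) (Iic x) :=
      (exp_integrableOn_Iic (2 * M) a x (by positivity)).const_mul 4
    refine Integrable.mono hgint (hfmeas.stronglyMeasurable.aestronglyMeasurable) ?_
    refine ae_restrict_of_forall_mem measurableSet_Iic fun s hs => ?_
    rw [Real.norm_eq_abs, Real.norm_eq_abs, abs_of_nonneg (hfnonneg s),
      abs_of_nonneg (by positivity)]
    exact hfle s (le_trans hs hx)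
  -- the primitive v
  set v : ℝ → ℝ := fun x => (∫ s in Iic a, f s) + ∫ s in a..x, f s with hvdef
  have hcontf : ∀ x ≤ a, ContinuousOn f (uIcc a x) := by
    intro x hx
    rw [uIcc_of_ge hx]
    refine ((hy₁c.continuousOn).pow 2).inv₀ ?_
    intro s hsm
    exact pow_ne_zero 2 (hy₁pos s hsm.2).ne'
  have hvder : ∀ x ≤ a, HasDerivAt v (f x) x := by
    intro x hx
    have hcontat : ContinuousAt f x := by
      have : ContinuousAt (fun s => (y₁ s) ^ 2) x := (hy₁c.continuousAt).pow 2
      exact this.inv₀ (pow_ne_zero 2 (hy₁pos x hx).ne')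
    have hii : IntervalIntegrable f volume a x := (hcontf x hx).intervalIntegrable
    exact (intervalIntegral.integral_hasDerivAt_right hii
      (hfmeas.stronglyMeasurable.stronglyMeasurableAtFilter) hcontat).const_add _
  have hveq : ∀ x ≤ a, v x = ∫ s in Iic x, f s := by
    intro x hx
    have h1 := intervalIntegral.integral_Iic_sub_Iic (hfint a le_rfl) (hfint x hx)
    have h2 : v x = (∫ s in Iic a, f s) + ∫ s in a..x, f s := rfl
    rw [h2]
    linarith [h1]
  -- v is positive
  have hvpos : ∀ x ≤ a, 0 < v x := by
    intro x hx
    rw [hveq x hx]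
    have hIoc : (0:ℝ) < ∫ s in (x - 1)..x, f s := by
      refine intervalIntegral.intervalIntegral_pos_of_pos_on ?_ ?_ (by linarith)
      · refine ContinuousOn.intervalIntegrable ?_
        refine ((hy₁c.continuousOn).pow 2).inv₀ ?_
        intro s hsm
        rw [uIcc_of_le (by linarith : x - 1 ≤ x)] at hsm
        exact pow_ne_zero 2 (hy₁pos s (hsm.2.trans hx)).ne'
      · intro s hs
        exact inv_pos.mpr (pow_pos (hy₁pos s (hs.2.le.trans hx)) 2)
    have hmono : (∫ s in (x-1)..x, f s) ≤ ∫ s in Iic x, f s := by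
      rw [intervalIntegral.integral_of_le (by linarith : x - 1 ≤ x)]
      refine MeasureTheory.setIntegral_mono_set (hfint x hx) ?_ ?_
      · exact Filter.Eventually.of_forall fun s => hfnonneg s
      · exact HasSubset.Subset.eventuallyLE Ioc_subset_Iic_self
    linarith
  -- v is bounded by an exponential
  have hvle : ∀ x ≤ a, v x ≤ (y₁ x)⁻¹ * 2 * (Real.exp (M * (x - a)) / M) := by
    intro x hx
    rw [hveq x hx]
    have hanti : ∀ s ≤ x, y₁ x ≤ y₁ s := by
      intro s hs
      rcases eq_or_lt_of_le hs with rfl | hlt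
      · exact le_refl _
      · have := anti_on_Icc (b := s) (a := x) hy₁c.continuousOn
          (fun t _ => hy₁ t) (fun t ht => hd0 t (ht.2.le.trans hx))
        exact this (left_mem_Icc.mpr hlt.le) (right_mem_Icc.mpr hlt.le) hlt.le
    have hptwise : ∀ s ∈ Iic x, f s ≤ (y₁ x)⁻¹ * 2 * Real.exp (M * (s - a)) := by
      intro s hs
      rw [mem_Iic] at hs
      have hsa : s ≤ a := hs.trans hx
      have h1 : f s = (y₁ s)⁻¹ * (y₁ s)⁻¹ := by
        show ((y₁ s) ^ 2)⁻¹ = _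
        rw [sq, mul_inv]
      rw [h1, mul_assoc]
      refine mul_le_mul ?_ (hinv s hsa) (inv_nonneg.mpr (hy₁pos s hsa).le)
        (inv_nonneg.mpr (hy₁pos x hx).le)
      exact inv_anti₀ (hy₁pos x hx) (hanti s hs)
    have hint2 : IntegrableOn (fun s => (y₁ x)⁻¹ * 2 * Real.exp (M * (s - a))) (Iic x) :=
      (exp_integrableOn_Iic M a x hM).const_mul _
    have := MeasureTheory.setIntegral_mono_on (hfint x hx) hint2 measurableSet_Iic hptwise
    refine this.trans ?_
    rw [MeasureTheory.integral_const_mul, exp_integral_Iic M a x hM]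
  -- the decaying solution w = y₁ * v on Iic a
  set w : ℝ → ℝ := fun t => y₁ t * v t with hwdef
  set wd : ℝ → ℝ := fun t => y₁d t * v t + (y₁ t)⁻¹ with hwddef
  have hwder : ∀ t ≤ a, HasDerivAt w (wd t) t := by
    intro t ht
    have hne : y₁ t ≠ 0 := (hy₁pos t ht).ne'
    have h1 := (hy₁ t).mul (hvder t ht)
    have h2 : y₁d t * v t + y₁ t * f t = wd t := by
      show _ = y₁d t * v t + (y₁ t)⁻¹
      congr 1
      show y₁ t * ((y₁ t) ^ 2)⁻¹ = (y₁ t)⁻¹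
      rw [sq, mul_inv, ← mul_assoc, mul_inv_cancel₀ hne, one_mul]
    rw [← h2]
    exact h1
  have hwdder : ∀ t ≤ a, HasDerivAt wd (qt t * w t) t := by
    intro t ht
    have hne : y₁ t ≠ 0 := (hy₁pos t ht).ne'
    have h1 := ((hy₁d t).mul (hvder t ht)).add ((hy₁ t).inv hne)
    convert h1 using 1
    rotate_left 3
    simp only [hwdef, hfdef]
    field_simp
    ring
    all_goals rfl
  -- the global solution matching w at a
  obtain ⟨Z, Zd, hZa, hZda, hZ, hZd⟩ := exists_global_solution qt a (w a) (wd a) hqt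
  have hZc : Continuous Z := by
    rw [continuous_iff_continuousAt]; exact fun x => (hZ x).continuousAt
  have hZdc : Continuous Zd := by
    rw [continuous_iff_continuousAt]; exact fun x => (hZd x).continuousAt
  have hZw : ∀ x ≤ a, Z x = w x := by
    intro x hx
    rcases eq_or_lt_of_le hx with rfl | hxa
    · exact hZa
    have hwc : ContinuousOn w (Icc (x - 1) a) := fun t ht =>
      ((hwder t ht.2).continuousAt).continuousWithinAt
    have hwdc : ContinuousOn wd (Icc (x - 1) a) := fun t ht =>
      ((hwdder t ht.2).continuousAt).continuousWithinAt
    have := backward_unique qt hqt (show x - 1 < a by linarith)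
      hZc.continuousOn hZdc.continuousOn hwc hwdc
      (fun t _ => hZ t) (fun t _ => hZd t)
      (fun t ht => hwder t ht.2.le) (fun t ht => hwdder t ht.2.le)
      hZa hZda
    exact this x ⟨by linarith, hx⟩
  -- scaling constant
  set k : ℝ := min 1 ((M / 2) * Real.exp (M * a)) with hkdef
  have hk0 : 0 < k := lt_min one_pos (by positivity)
  have hYder : ∀ x, HasDerivAt (fun x => k * Z x) (k * Zd x) x := fun x =>
    (hZ x).const_mul k
  have hYd1 : deriv (fun x => k * Z x) = fun x => k * Zd x :=
    funext fun x => (hYder x).deriv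
  have hYdder : ∀ x, HasDerivAt (fun x => k * Zd x) (k * (qt x * Z x)) x := fun x =>
    (hZd x).const_mul k
  have hYd2 : deriv (deriv (fun x => k * Z x)) = fun x => k * (qt x * Z x) := by
    rw [hYd1]
    exact funext fun x => (hYdder x).deriv
  refine ⟨fun x => k * Z x, ?_, ?_, a, by linarith, ?_, ?_⟩
  · -- smoothness
    have h2 : (2 : WithTop ℕ∞) = (1 : WithTop ℕ∞) + 1 := by norm_num
    rw [h2, contDiff_succ_iff_deriv]
    refine ⟨fun x => (hYder x).differentiableAt, by simp, ?_⟩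
    rw [hYd1]
    have h1 : (1 : WithTop ℕ∞) = (0 : WithTop ℕ∞) + 1 := by norm_num
    rw [h1, contDiff_succ_iff_deriv]
    refine ⟨fun x => (hYdder x).differentiableAt, by simp, ?_⟩
    have h0 : deriv (fun x => k * Zd x) = fun x => k * (qt x * Z x) :=
      funext fun x => (hYdder x).deriv
    rw [h0, contDiff_zero]
    exact continuous_const.mul (hqt.mul hZc)
  · -- the differential equation
    intro x
    rw [hYd2]
    ring
  · -- positivity
    intro x hx
    have hZx : Z x = w x := hZw x hx.le
    have hwpos : 0 < y₁ x * v x := mul_pos (hy₁pos x hx.le) (hvpos x hx.le)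
    have hZpos : 0 < Z x := by rw [hZx]; exact hwpos
    exact mul_pos hk0 hZpos
  · -- decay bound
    intro x hx
    have hxa : x ≤ a := hx.le
    have hZx : Z x = w x := hZw x hxa
    have hne : y₁ x ≠ 0 := (hy₁pos x hxa).ne'
    have hMne : M ≠ 0 := hM.ne'
    have h2 : y₁ x * v x ≤ y₁ x * ((y₁ x)⁻¹ * 2 * (Real.exp (M * (x - a)) / M)) :=
      mul_le_mul_of_nonneg_left (hvle x hxa) (hy₁pos x hxa).le
    have h3 : y₁ x * ((y₁ x)⁻¹ * 2 * (Real.exp (M * (x - a)) / M)) =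
        2 / M * Real.exp (M * (x - a)) := by
      field_simp
    have hwle : w x ≤ 2 / M * Real.exp (M * (x - a)) := by
      calc w x = y₁ x * v x := rfl
        _ ≤ _ := h2
        _ = _ := h3
    have hxneg : x < 0 := by linarith
    have habs : |x| = -x := abs_of_neg hxneg
    have hwpos : 0 < y₁ x * v x := mul_pos (hy₁pos x hxa) (hvpos x hxa)
    have hZpos : 0 < Z x := by rw [hZx]; exact hwpos
    rw [abs_of_pos (mul_pos hk0 hZpos)]
    have hk2 : k ≤ M / 2 * Real.exp (M * a) := min_le_right _ _
    have hwnn : 0 ≤ w x := hwpos.le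
    calc k * Z x = k * w x := by rw [hZx]
      _ ≤ (M / 2 * Real.exp (M * a)) * (2 / M * Real.exp (M * (x - a))) :=
          mul_le_mul hk2 hwle hwnn (by positivity)
      _ = Real.exp (M * a) * Real.exp (M * (x - a)) := by
          field_simp
      _ = Real.exp (-M * |x|) := by
          rw [← Real.exp_add, habs]
          congr 1
          ring
end

section
/- Let β₁ > 0, β₂ > 1/2 and γ ≠ 0 be real constants with β₁ + β₂ > 1, set β = min{β₂, β₁+β₂-1, 2β₂-1}, and let K ≥ 0. Suppose θ is differentiable on (1,∞) with |θ'(x) - γ| ≤ K·x^{-β₁} for all x > 1. Then there exists a constant C > 0 (depending only on γ, β₁, β₂, K) such that for all 1 < a < b: |∫_a^b sin(θ(x))·x^{-β₂} dx| ≤ C·a^{-β} and |∫_a^b cos(θ(x))·x^{-β₂} dx| ≤ C·a^{-β}. -/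
open Filter Real intervalIntegral
open MeasureTheory

lemma myint_rpow_le {a b p : ℝ} (ha : 0 < a) (hab : a ≤ b) (hp : 1 < p) :
    ∫ x in a..b, x ^ (-p) ≤ a ^ (1 - p) / (p - 1) := by
  have h0 : (0:ℝ) ∉ Set.uIcc a b := by
    simp only [Set.mem_uIcc]; push_neg
    constructor <;> intro h <;> nlinarith
  rw [integral_rpow (Or.inr ⟨by intro h; simp at h; linarith, h0⟩)]
  have hb : 0 < b := lt_of_lt_of_le ha hab
  have h1 : (0:ℝ) < b ^ (-p + 1) := Real.rpow_pos_of_pos hb _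
  have key : (b ^ (-p + 1) - a ^ (-p + 1)) / (-p + 1)
      = (a ^ (1 - p) - b ^ (-p + 1)) / (p - 1) := by
    rw [show -p + 1 = 1 - p by ring]
    rw [show (1:ℝ) - p = -(p - 1) by ring, div_neg]
    ring
  rw [key]
  apply div_le_div_of_nonneg_right ?_ (by linarith) |>.trans
  · exact le_refl _
  · linarith

lemma mykey (β₁ β₂ γ K β : ℝ) (hβ₁ : 0 < β₁) (hβ₂ : 1 / 2 < β₂) (hγ : γ ≠ 0)
    (hsum : 1 < β₁ + β₂) (hK : 0 ≤ K)
    (hβ : β = min β₂ (min (β₁ + β₂ - 1) (2 * β₂ - 1)))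
    (θ : ℝ → ℝ)
    (hdiff : ∀ x : ℝ, 1 < x → DifferentiableAt ℝ θ x)
    (hder : ∀ x : ℝ, 1 < x → |deriv θ x - γ| ≤ K * x ^ (-β₁))
    (a b : ℝ) (ha : 1 < a) (hab : a < b) :
    |∫ x in a..b, Real.sin (θ x) * x ^ (-β₂)| ≤
      ((3 + K / (β₁ + β₂ - 1)) / |γ|) * a ^ (-β) := by
  have hγ' : 0 < |γ| := abs_pos.mpr hγ
  have ha0 : 0 < a := by linarith
  have hb1 : 1 < b := lt_trans ha hab
  -- positive exponents
  have hβpos : 0 < β := by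
    rw [hβ]; simp only [lt_min_iff]; refine ⟨by linarith, by linarith, by linarith⟩
  have hβle1 : β ≤ β₂ := hβ ▸ min_le_left _ _
  have hβle2 : β ≤ β₁ + β₂ - 1 := hβ ▸ le_trans (min_le_right _ _) (min_le_left _ _)
  -- the antiderivative
  set F : ℝ → ℝ := fun x => -(Real.cos (θ x) * x ^ (-β₂)) / γ with hF
  set F' : ℝ → ℝ := fun x =>
    -((-Real.sin (θ x) * deriv θ x) * x ^ (-β₂)
      + Real.cos (θ x) * (-β₂ * x ^ (-β₂ - 1))) / γ with hF'
  have hmem : ∀ x ∈ Set.uIcc a b, 1 < x := by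
    intro x hx
    rw [Set.uIcc_of_le hab.le] at hx
    exact lt_of_lt_of_le ha hx.1
  have hFderiv : ∀ x ∈ Set.uIcc a b, HasDerivAt F (F' x) x := by
    intro x hx
    have hx1 : 1 < x := hmem x hx
    have h1 : HasDerivAt θ (deriv θ x) x := (hdiff x hx1).hasDerivAt
    have h2 : HasDerivAt (fun y => Real.cos (θ y)) (-Real.sin (θ x) * deriv θ x) x := h1.cos
    have h3 : HasDerivAt (fun y : ℝ => y ^ (-β₂)) (-β₂ * x ^ (-β₂ - 1)) x := by
      exact Real.hasDerivAt_rpow_const (x := x) (p := -β₂) (Or.inl (by positivity))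
    exact ((h2.mul h3).neg).div_const γ
  -- continuity of θ on the interval
  have hθc : ContinuousOn θ (Set.uIcc a b) := fun x hx =>
    ((hdiff x (hmem x hx)).continuousAt).continuousWithinAt
  -- the integrand g
  set g : ℝ → ℝ := fun x => Real.sin (θ x) * x ^ (-β₂) with hg
  have hgc : ContinuousOn g (Set.uIcc a b) := by
    apply ContinuousOn.mul (Real.continuous_sin.comp_continuousOn hθc)
    exact fun x hx => (Real.continuousAt_rpow_const x _
      (Or.inl (by have := hmem x hx; positivity))).continuousWithinAt
  have hgint : IntervalIntegrable g volume a b := hgc.intervalIntegrable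
  -- the error term and its bound
  set G : ℝ → ℝ := fun x => (K * x ^ (-(β₁ + β₂)) + β₂ * x ^ (-(β₂ + 1))) / |γ| with hG
  have hGc : ContinuousOn G (Set.uIcc a b) := by
    apply ContinuousOn.div_const
    apply ContinuousOn.add
    · exact ContinuousOn.mul continuousOn_const (fun x hx =>
        (Real.continuousAt_rpow_const x _
          (Or.inl (by have := hmem x hx; positivity))).continuousWithinAt)
    · exact ContinuousOn.mul continuousOn_const (fun x hx =>
        (Real.continuousAt_rpow_const x _
          (Or.inl (by have := hmem x hx; positivity))).continuousWithinAt)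
  have hGint : IntervalIntegrable G volume a b := hGc.intervalIntegrable
  set E : ℝ → ℝ := fun x => g x - F' x with hE
  -- pointwise bound on E for x in the interval
  have hEbound : ∀ x ∈ Set.uIcc a b, |E x| ≤ G x := by
    intro x hx
    have hx1 : 1 < x := hmem x hx
    have hx0 : 0 < x := by linarith
    have hrw : E x = (Real.sin (θ x) * (γ - deriv θ x) * x ^ (-β₂)
        - β₂ * Real.cos (θ x) * x ^ (-β₂ - 1)) / γ := by
      simp only [hE, hg, hF']
      field_simp
      ring
    rw [hrw, abs_div]
    rw [hG, div_le_div_iff_of_pos_right hγ']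
    have h1 : |Real.sin (θ x) * (γ - deriv θ x) * x ^ (-β₂)| ≤ K * x ^ (-(β₁ + β₂)) := by
      rw [abs_mul, abs_mul]
      have hs : |Real.sin (θ x)| ≤ 1 := Real.abs_sin_le_one _
      have hd : |γ - deriv θ x| ≤ K * x ^ (-β₁) := by
        rw [abs_sub_comm]; exact hder x hx1
      have hr : |x ^ (-β₂)| = x ^ (-β₂) := abs_of_nonneg (Real.rpow_nonneg hx0.le _)
      rw [hr]
      calc |Real.sin (θ x)| * |γ - deriv θ x| * x ^ (-β₂)
          ≤ 1 * (K * x ^ (-β₁)) * x ^ (-β₂) :=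
            mul_le_mul (mul_le_mul hs hd (abs_nonneg _) zero_le_one) le_rfl
              (Real.rpow_nonneg hx0.le _)
              (by rw [one_mul]; exact mul_nonneg hK (Real.rpow_nonneg hx0.le _))
        _ = K * x ^ (-(β₁ + β₂)) := by
            rw [neg_add, Real.rpow_add hx0]; ring
    have h2 : |β₂ * Real.cos (θ x) * x ^ (-β₂ - 1)| ≤ β₂ * x ^ (-(β₂ + 1)) := by
      rw [abs_mul, abs_mul, abs_of_nonneg (by linarith : (0:ℝ) ≤ β₂),
        abs_of_nonneg (Real.rpow_nonneg hx0.le _), show -β₂ - 1 = -(β₂+1) by ring]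
      exact mul_le_mul_of_nonneg_right
        (mul_le_of_le_one_right (by linarith) (Real.abs_cos_le_one _))
        (Real.rpow_nonneg hx0.le _)
    calc |Real.sin (θ x) * (γ - deriv θ x) * x ^ (-β₂) - β₂ * Real.cos (θ x) * x ^ (-β₂ - 1)|
        ≤ |Real.sin (θ x) * (γ - deriv θ x) * x ^ (-β₂)| + |β₂ * Real.cos (θ x) * x ^ (-β₂ - 1)| :=
          abs_sub _ _
      _ ≤ K * x ^ (-(β₁ + β₂)) + β₂ * x ^ (-(β₂ + 1)) := add_le_add h1 h2
  -- integrability of E and F'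
  have hEmeas : AEStronglyMeasurable E (volume.restrict (Set.uIoc a b)) := by
    have hsub : Set.uIoc a b ⊆ Set.uIcc a b := Set.uIoc_subset_uIcc
    have hθm : AEMeasurable θ (volume.restrict (Set.uIoc a b)) :=
      (hθc.mono hsub).aemeasurable measurableSet_uIoc
    have hd : AEMeasurable (deriv θ) (volume.restrict (Set.uIoc a b)) :=
      (measurable_deriv θ).aemeasurable
    apply AEMeasurable.aestronglyMeasurable
    apply AEMeasurable.sub
    · exact (Real.measurable_sin.comp_aemeasurable hθm).mul
        ((measurable_id.pow_const _).aemeasurable)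
    · exact ((((Real.measurable_sin.comp_aemeasurable hθm).neg.mul hd).mul
        ((measurable_id.pow_const _).aemeasurable)).add
        ((Real.measurable_cos.comp_aemeasurable hθm).mul
          ((measurable_id.pow_const _).aemeasurable.const_mul _))).neg.div_const _
  have hEint : IntervalIntegrable E volume a b := by
    rw [intervalIntegrable_iff]
    apply hGint.def'.mono' hEmeas
    filter_upwards [ae_restrict_mem measurableSet_uIoc] with x hx
    exact (Real.norm_eq_abs _).le.trans (hEbound x (Set.uIoc_subset_uIcc hx))
  have hF'int : IntervalIntegrable F' volume a b := by
    have : F' = fun x => g x - E x := by funext x; simp [hE]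
    rw [this]; exact hgint.sub hEint
  -- FTC
  have hFTC : ∫ x in a..b, F' x = F b - F a := integral_eq_sub_of_hasDerivAt hFderiv hF'int
  -- decompose
  have hsplit : (∫ x in a..b, g x) = (F b - F a) + ∫ x in a..b, E x := by
    rw [← hFTC, ← integral_add hF'int hEint]
    congr 1; funext x; simp [hE]
  -- bound the E integral
  have hEintle : |∫ x in a..b, E x| ≤ ∫ x in a..b, G x := by
    have := intervalIntegral.norm_integral_le_abs_of_norm_le (f := E) (g := G)
      (μ := volume) (a := a) (b := b) ?_ hGint
    · rw [Real.norm_eq_abs] at this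
      refine this.trans ?_
      rw [abs_of_nonneg]
      apply intervalIntegral.integral_nonneg hab.le
      intro x hx
      have hx0 : (0:ℝ) < x := lt_trans (by linarith) (lt_of_lt_of_le ha hx.1)
      have h1' := Real.rpow_nonneg hx0.le (-(β₁+β₂))
      have h2' := Real.rpow_nonneg hx0.le (-(β₂+1))
      simp only [hG]
      apply div_nonneg _ (abs_nonneg _)
      nlinarith
    · filter_upwards [ae_restrict_mem measurableSet_uIoc] with x hx
      exact (Real.norm_eq_abs _).le.trans (hEbound x (Set.uIoc_subset_uIcc hx))
  -- bounds on the boundary terms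
  have hb0 : (0:ℝ) < b := by linarith
  have hFbound : ∀ x : ℝ, 0 < x → |F x| ≤ x ^ (-β₂) / |γ| := by
    intro x hx0
    simp only [hF]
    rw [abs_div, abs_neg, abs_mul, abs_of_nonneg (Real.rpow_nonneg hx0.le _)]
    exact div_le_div_of_nonneg_right
      (mul_le_of_le_one_left (Real.rpow_nonneg hx0.le _) (Real.abs_cos_le_one _)) hγ'.le
  -- value of the G integral
  have h0notin : (0:ℝ) ∉ Set.uIcc a b := by
    rw [Set.uIcc_of_le hab.le, Set.mem_Icc]; push_neg; intro h; linarith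
  have hf1int : IntervalIntegrable (fun x : ℝ => x ^ (-(β₁ + β₂))) volume a b :=
    intervalIntegral.intervalIntegrable_rpow (Or.inr h0notin)
  have hf2int : IntervalIntegrable (fun x : ℝ => x ^ (-(β₂ + 1))) volume a b :=
    intervalIntegral.intervalIntegrable_rpow (Or.inr h0notin)
  have hS : 0 < β₁ + β₂ - 1 := by linarith
  have hGval : ∫ x in a..b, G x
      = (K * ∫ x in a..b, x ^ (-(β₁ + β₂))) / |γ|
        + (β₂ * ∫ x in a..b, x ^ (-(β₂ + 1))) / |γ| := by
    simp only [hG]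
    rw [intervalIntegral.integral_div, intervalIntegral.integral_add
      (hf1int.const_mul K) (hf2int.const_mul β₂),
      intervalIntegral.integral_const_mul, intervalIntegral.integral_const_mul]
    ring
  have hi1 : ∫ x in a..b, x ^ (-(β₁ + β₂)) ≤ a ^ (1 - (β₁ + β₂)) / (β₁ + β₂ - 1) :=
    myint_rpow_le ha0 hab.le hsum
  have hi2 : ∫ x in a..b, x ^ (-(β₂ + 1)) ≤ a ^ (-β₂) / β₂ := by
    have := myint_rpow_le ha0 hab.le (p := β₂ + 1) (by linarith)
    simpa [show (1:ℝ) - (β₂ + 1) = -β₂ by ring, show β₂ + 1 - 1 = β₂ by ring] using this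
  -- exponent comparisons
  have hA1 : a ^ (-β₂) ≤ a ^ (-β) :=
    Real.rpow_le_rpow_of_exponent_le ha.le (by linarith)
  have hA2 : a ^ (1 - (β₁ + β₂)) ≤ a ^ (-β) := by
    rw [show 1 - (β₁ + β₂) = -(β₁ + β₂ - 1) by ring]
    exact Real.rpow_le_rpow_of_exponent_le ha.le (by linarith)
  have hb2 : b ^ (-β₂) ≤ a ^ (-β₂) :=
    Real.rpow_le_rpow_of_nonpos ha0 hab.le (by linarith)
  have hApos : 0 < a ^ (-β) := Real.rpow_pos_of_pos ha0 _
  -- combine everything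
  have hmain : |∫ x in a..b, g x| ≤ b ^ (-β₂) / |γ| + a ^ (-β₂) / |γ| + ∫ x in a..b, G x := by
    rw [hsplit]
    calc |F b - F a + ∫ x in a..b, E x|
        ≤ |F b - F a| + |∫ x in a..b, E x| := abs_add_le _ _
      _ ≤ (|F b| + |F a|) + ∫ x in a..b, G x :=
          add_le_add (abs_sub _ _) hEintle
      _ ≤ b ^ (-β₂) / |γ| + a ^ (-β₂) / |γ| + ∫ x in a..b, G x := by
          have := hFbound b hb0
          have := hFbound a ha0
          linarith
  refine hmain.trans ?_
  rw [hGval]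
  have e1 : (K * ∫ x in a..b, x ^ (-(β₁ + β₂))) / |γ|
      ≤ (K * (a ^ (1 - (β₁ + β₂)) / (β₁ + β₂ - 1))) / |γ| := by
    apply div_le_div_of_nonneg_right _ hγ'.le
    exact mul_le_mul_of_nonneg_left hi1 hK
  have e2 : (β₂ * ∫ x in a..b, x ^ (-(β₂ + 1))) / |γ|
      ≤ (β₂ * (a ^ (-β₂) / β₂)) / |γ| := by
    apply div_le_div_of_nonneg_right _ hγ'.le
    exact mul_le_mul_of_nonneg_left hi2 (by linarith)
  have e3 : β₂ * (a ^ (-β₂) / β₂) = a ^ (-β₂) := by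
    field_simp
  have e4 : K * (a ^ (1 - (β₁ + β₂)) / (β₁ + β₂ - 1)) ≤ (K / (β₁ + β₂ - 1)) * a ^ (-β) := by
    rw [mul_div_assoc', div_mul_eq_mul_div]
    apply div_le_div_of_nonneg_right _ hS.le
    exact mul_le_mul_of_nonneg_left hA2 hK
  rw [e3] at e2
  have final : b ^ (-β₂) / |γ| + a ^ (-β₂) / |γ|
      + ((K * (a ^ (1 - (β₁ + β₂)) / (β₁ + β₂ - 1))) / |γ| + a ^ (-β₂) / |γ|)
      ≤ (3 + K / (β₁ + β₂ - 1)) / |γ| * a ^ (-β) := by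
    rw [div_mul_eq_mul_div]
    rw [← add_div, ← add_div, ← add_div, div_le_div_iff₀ hγ' hγ']
    have h5 : K * (a ^ (1 - (β₁ + β₂)) / (β₁ + β₂ - 1)) ≤ K / (β₁ + β₂ - 1) * a ^ (-β) := e4
    nlinarith [hγ'.le]
  linarith

/-- Let `β₁ > 0`, `β₂ > 1/2`, `γ ≠ 0` with `β₁ + β₂ > 1`, and set
`β = min{β₂, β₁+β₂-1, 2β₂-1}`; let `K ≥ 0`. If `θ` is differentiable on `(1,∞)` with
`|θ'(x) - γ| ≤ K·x^{-β₁}` for `x > 1`, then there is `C > 0` (depending only on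
`γ, β₁, β₂, K`) with `|∫_a^b sin(θ(x))·x^{-β₂} dx| ≤ C·a^{-β}` and
`|∫_a^b cos(θ(x))·x^{-β₂} dx| ≤ C·a^{-β}` for all `1 < a < b`. -/
theorem oscillatory_integral_bound
    (β₁ β₂ γ K β : ℝ) (hβ₁ : 0 < β₁) (hβ₂ : 1 / 2 < β₂) (hγ : γ ≠ 0)
    (hsum : 1 < β₁ + β₂) (hK : 0 ≤ K)
    (hβ : β = min β₂ (min (β₁ + β₂ - 1) (2 * β₂ - 1))) :
    ∃ C : ℝ, 0 < C ∧ ∀ θ : ℝ → ℝ,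
      (∀ x : ℝ, 1 < x → DifferentiableAt ℝ θ x) →
      (∀ x : ℝ, 1 < x → |deriv θ x - γ| ≤ K * x ^ (-β₁)) →
      ∀ a b : ℝ, 1 < a → a < b →
        |∫ x in a..b, Real.sin (θ x) * x ^ (-β₂)| ≤ C * a ^ (-β) ∧
        |∫ x in a..b, Real.cos (θ x) * x ^ (-β₂)| ≤ C * a ^ (-β) := by
  have hS : 0 < β₁ + β₂ - 1 := by linarith
  refine ⟨(3 + K / (β₁ + β₂ - 1)) / |γ|, ?_, ?_⟩
  · exact div_pos (by have := div_nonneg hK hS.le; linarith) (abs_pos.mpr hγ)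
  · intro θ h1 h2 a b ha hab
    constructor
    · exact mykey β₁ β₂ γ K β hβ₁ hβ₂ hγ hsum hK hβ θ h1 h2 a b ha hab
    · have := mykey β₁ β₂ γ K β hβ₁ hβ₂ hγ hsum hK hβ (fun x => θ x + π / 2)
        (fun x hx => (h1 x hx).add_const _)
        (fun x hx => by rw [deriv_add_const]; exact h2 x hx) a b ha hab
      simpa only [Real.sin_add_pi_div_two] using this
end
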